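/- Every harmonic matrix of order 4 is isomorphic (via global relabeling of symbols and row permutation) to the matrix with rows (1,2,3,4), (2,4,1,3), (3,1,4,2), (4,3,2,1). -/
import Mathlib

/-- `M` (1-indexed, entries in `{1,…,n}`) is a harmonic matrix of order `n`:
each row is a permutation of `{1,…,n}` and each directed pair `(a,b)`, `a ≠ b`,
occurs exactly once as a horizontally adjacent pair. -/
def IsHarmonic (n : ℕ) (M : ℕ → ℕ → ℕ) : Prop :=
  (∀ i ∈ Finset.Icc 1 n, ∀ v ∈ Finset.Icc 1 n,
      ∃! j, j ∈ Finset.Icc 1 n ∧ M i j = v) ∧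
  (∀ a ∈ Finset.Icc 1 n, ∀ b ∈ Finset.Icc 1 n, a ≠ b →
      ∃! p : ℕ × ℕ, p.1 ∈ Finset.Icc 1 n ∧ p.2 ∈ Finset.Icc 1 (n - 1) ∧
        M p.1 p.2 = a ∧ M p.1 (p.2 + 1) = b)

def A4 : ℕ → ℕ → ℕ := fun i j =>
  (([[1,2,3,4],[2,4,1,3],[3,1,4,2],[4,3,2,1]] : List (List ℕ)).getD (i-1) []).getD (j-1) 0

/- ### Auxiliary machinery -/

def perms4 : List (List ℕ) :=
 [[1,2,3,4],[1,2,4,3],[1,3,2,4],[1,3,4,2],[1,4,2,3],[1,4,3,2],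
  [2,1,3,4],[2,1,4,3],[2,3,1,4],[2,3,4,1],[2,4,1,3],[2,4,3,1],
  [3,1,2,4],[3,1,4,2],[3,2,1,4],[3,2,4,1],[3,4,1,2],[3,4,2,1],
  [4,1,2,3],[4,1,3,2],[4,2,1,3],[4,2,3,1],[4,3,1,2],[4,3,2,1]]

def rget (r : List ℕ) (j : ℕ) : ℕ := r.getD (j-1) 0

def rows4 (r1 r2 r3 r4 : List ℕ) (i : ℕ) : List ℕ :=
  if i = 1 then r1 else if i = 2 then r2 else if i = 3 then r3 else r4

def codes3 (r : List ℕ) : List ℕ :=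
  [5 * rget r 1 + rget r 2, 5 * rget r 2 + rget r 3, 5 * rget r 3 + rget r 4]

def nodupB : List ℕ → Bool
  | [] => true
  | a :: l => (!l.contains a) && nodupB l

def cells16 : List (ℕ × ℕ) :=
  [(1,1),(1,2),(1,3),(1,4),(2,1),(2,2),(2,3),(2,4),
   (3,1),(3,2),(3,3),(3,4),(4,1),(4,2),(4,3),(4,4)]

def matchB (s t r2 r3 r4 : List ℕ) : Bool :=
  cells16.all fun p =>
    A4 (rget t p.1) p.2 == rget s (rget (rows4 [1,2,3,4] r2 r3 r4 p.1) p.2)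

def isoB (r2 r3 r4 : List ℕ) : Bool :=
  perms4.any fun s => perms4.any fun t => matchB s t r2 r3 r4

def checkAll : Bool :=
  perms4.all fun r2 =>
    !(nodupB (codes3 r2 ++ [7,13,19])) ||
      perms4.all fun r3 =>
        !(nodupB (codes3 r3 ++ codes3 r2 ++ [7,13,19])) ||
          perms4.all fun r4 =>
            !(nodupB (codes3 r4 ++ codes3 r3 ++ codes3 r2 ++ [7,13,19])) ||
              isoB r2 r3 r4

set_option maxRecDepth 100000 in
theorem checkAll_true : checkAll = true := by rfl

lemma nodupB_of_nodup : ∀ l : List ℕ, l.Nodup → nodupB l = true := by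
  intro l hl
  induction l with
  | nil => rfl
  | cons a l ih =>
    rw [List.nodup_cons] at hl
    simp [nodupB, ih hl.2, List.elem_iff, hl.1]

theorem core : ∀ r2 ∈ perms4, ∀ r3 ∈ perms4, ∀ r4 ∈ perms4,
    (codes3 r4 ++ codes3 r3 ++ codes3 r2 ++ [7,13,19]).Nodup →
    ∃ s ∈ perms4, ∃ t ∈ perms4, matchB s t r2 r3 r4 = true := by
  intro r2 h2 r3 h3 r4 h4 hnd
  have s2 : (codes3 r2 ++ [7,13,19]).Sublist
      (codes3 r4 ++ codes3 r3 ++ codes3 r2 ++ [7,13,19]) := by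
    simp only [List.append_assoc]
    exact (List.sublist_append_right _ _).trans (List.sublist_append_right _ _)
  have s3 : (codes3 r3 ++ codes3 r2 ++ [7,13,19]).Sublist
      (codes3 r4 ++ codes3 r3 ++ codes3 r2 ++ [7,13,19]) := by
    simp only [List.append_assoc]
    exact List.sublist_append_right _ _
  have h := List.all_eq_true.mp checkAll_true r2 h2
  rw [nodupB_of_nodup _ (hnd.sublist s2)] at h
  simp only [Bool.not_true, Bool.false_or] at h
  have h' := List.all_eq_true.mp h r3 h3
  rw [nodupB_of_nodup _ (by simpa using hnd.sublist s3)] at h'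
  simp only [Bool.not_true, Bool.false_or] at h'
  have h'' := List.all_eq_true.mp h' r4 h4
  rw [nodupB_of_nodup _ (by simpa using hnd)] at h''
  simp only [Bool.not_true, Bool.false_or] at h''
  simpa [isoB, List.any_eq_true] using h''

lemma mem_perms4 (a b c d : ℕ) (ha1 : 1 ≤ a) (ha4 : a ≤ 4) (hb1 : 1 ≤ b) (hb4 : b ≤ 4)
    (hc1 : 1 ≤ c) (hc4 : c ≤ 4) (hd1 : 1 ≤ d) (hd4 : d ≤ 4)
    (nab : a ≠ b) (nac : a ≠ c) (nad : a ≠ d) (nbc : b ≠ c) (nbd : b ≠ d) (ncd : c ≠ d) :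
    [a, b, c, d] ∈ perms4 := by
  interval_cases a <;> interval_cases b <;> interval_cases c <;> interval_cases d <;>
    first | decide | omega

lemma row_mem_perms4 (g : ℕ → ℕ) (hb : ∀ j, 1 ≤ j → j ≤ 4 → 1 ≤ g j ∧ g j ≤ 4)
    (hinj : ∀ j j', 1 ≤ j → j ≤ 4 → 1 ≤ j' → j' ≤ 4 → g j = g j' → j = j') :
    [g 1, g 2, g 3, g 4] ∈ perms4 := by
  have b1 := hb 1 (by norm_num) (by norm_num)
  have b2 := hb 2 (by norm_num) (by norm_num)
  have b3 := hb 3 (by norm_num) (by norm_num)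
  have b4 := hb 4 (by norm_num) (by norm_num)
  refine mem_perms4 _ _ _ _ b1.1 b1.2 b2.1 b2.2 b3.1 b3.2 b4.1 b4.2 ?_ ?_ ?_ ?_ ?_ ?_ <;>
    · intro h
      first
        | (have := hinj 1 2 (by norm_num) (by norm_num) (by norm_num) (by norm_num) h; omega)
        | (have := hinj 1 3 (by norm_num) (by norm_num) (by norm_num) (by norm_num) h; omega)
        | (have := hinj 1 4 (by norm_num) (by norm_num) (by norm_num) (by norm_num) h; omega)
        | (have := hinj 2 3 (by norm_num) (by norm_num) (by norm_num) (by norm_num) h; omega)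
        | (have := hinj 2 4 (by norm_num) (by norm_num) (by norm_num) (by norm_num) h; omega)
        | (have := hinj 3 4 (by norm_num) (by norm_num) (by norm_num) (by norm_num) h; omega)

lemma bijOn4 (f : ℕ → ℕ) (hmem : ∀ v, 1 ≤ v → v ≤ 4 → 1 ≤ f v ∧ f v ≤ 4)
    (hinj : ∀ v w, 1 ≤ v → v ≤ 4 → 1 ≤ w → w ≤ 4 → f v = f w → v = w) :
    Set.BijOn f (Set.Icc 1 4) (Set.Icc 1 4) := by
  refine ⟨?_, ?_, ?_⟩
  · intro x hx
    simp only [Set.mem_Icc] at *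
    exact hmem x hx.1 hx.2
  · intro x hx y hy h
    simp only [Set.mem_Icc] at hx hy
    exact hinj x y hx.1 hx.2 hy.1 hy.2 h
  · intro y hy
    simp only [Set.mem_Icc] at hy
    have h1 := hmem 1 (by norm_num) (by norm_num)
    have h2 := hmem 2 (by norm_num) (by norm_num)
    have h3 := hmem 3 (by norm_num) (by norm_num)
    have h4 := hmem 4 (by norm_num) (by norm_num)
    have d12 : f 1 ≠ f 2 := fun h => by
      have := hinj 1 2 (by norm_num) (by norm_num) (by norm_num) (by norm_num) h; omega
    have d13 : f 1 ≠ f 3 := fun h => by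
      have := hinj 1 3 (by norm_num) (by norm_num) (by norm_num) (by norm_num) h; omega
    have d14 : f 1 ≠ f 4 := fun h => by
      have := hinj 1 4 (by norm_num) (by norm_num) (by norm_num) (by norm_num) h; omega
    have d23 : f 2 ≠ f 3 := fun h => by
      have := hinj 2 3 (by norm_num) (by norm_num) (by norm_num) (by norm_num) h; omega
    have d24 : f 2 ≠ f 4 := fun h => by
      have := hinj 2 4 (by norm_num) (by norm_num) (by norm_num) (by norm_num) h; omega
    have d34 : f 3 ≠ f 4 := fun h => by
      have := hinj 3 4 (by norm_num) (by norm_num) (by norm_num) (by norm_num) h; omega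
    have hy4 : y = f 1 ∨ y = f 2 ∨ y = f 3 ∨ y = f 4 := by omega
    rcases hy4 with h | h | h | h
    · exact ⟨1, by simp [Set.mem_Icc], h.symm⟩
    · exact ⟨2, by simp [Set.mem_Icc], h.symm⟩
    · exact ⟨3, by simp [Set.mem_Icc], h.symm⟩
    · exact ⟨4, by simp [Set.mem_Icc], h.symm⟩

lemma perm_facts : ∀ s ∈ perms4, ∀ v ∈ [1,2,3,4], 1 ≤ rget s v ∧ rget s v ≤ 4 := by decide

lemma perm_inj : ∀ s ∈ perms4, ∀ v ∈ [1,2,3,4], ∀ w ∈ [1,2,3,4],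
    rget s v = rget s w → v = w := by decide

lemma mem1234 (v : ℕ) (h1 : 1 ≤ v) (h2 : v ≤ 4) : v ∈ [1,2,3,4] := by
  interval_cases v <;> decide

lemma perm_bijOn (s : List ℕ) (hs : s ∈ perms4) :
    Set.BijOn (fun v => rget s v) (Set.Icc 1 4) (Set.Icc 1 4) := by
  apply bijOn4
  · intro v h1 h2; exact perm_facts s hs v (mem1234 v h1 h2)
  · intro v w h1 h2 h3 h4 h; exact perm_inj s hs v (mem1234 v h1 h2) w (mem1234 w h3 h4) h

def idx12 : List (ℕ × ℕ) :=
  [(4,1),(4,2),(4,3),(3,1),(3,2),(3,3),(2,1),(2,2),(2,3),(1,1),(1,2),(1,3)]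

lemma codes_nodup (N : ℕ → ℕ → ℕ)
    (hb : ∀ i j, 1 ≤ i → i ≤ 4 → 1 ≤ j → j ≤ 4 → 1 ≤ N i j ∧ N i j ≤ 4)
    (hp : ∀ i j i' j', 1 ≤ i → i ≤ 4 → 1 ≤ j → j ≤ 3 → 1 ≤ i' → i' ≤ 4 → 1 ≤ j' → j' ≤ 3 →
      N i j = N i' j' → N i (j+1) = N i' (j'+1) → i = i' ∧ j = j') :
    (idx12.map fun p => 5 * N p.1 p.2 + N p.1 (p.2+1)).Nodup := by
  refine List.Nodup.map_on ?_ (by decide)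
  intro x hx y hy hf
  obtain ⟨x1, x2⟩ := x
  obtain ⟨y1, y2⟩ := y
  simp only [idx12, List.mem_cons, List.not_mem_nil, or_false, Prod.mk.injEq] at hx hy
  have hbx : 1 ≤ x1 ∧ x1 ≤ 4 ∧ 1 ≤ x2 ∧ x2 ≤ 3 := by omega
  have hby : 1 ≤ y1 ∧ y1 ≤ 4 ∧ 1 ≤ y2 ∧ y2 ≤ 3 := by omega
  have b1 := hb x1 x2 (by omega) (by omega) (by omega) (by omega)
  have b2 := hb x1 (x2+1) (by omega) (by omega) (by omega) (by omega)
  have b3 := hb y1 y2 (by omega) (by omega) (by omega) (by omega)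
  have b4 := hb y1 (y2+1) (by omega) (by omega) (by omega) (by omega)
  simp only at hf
  have e : N x1 x2 = N y1 y2 ∧ N x1 (x2+1) = N y1 (y2+1) := by omega
  have h := hp x1 x2 y1 y2 (by omega) (by omega) (by omega) (by omega)
    (by omega) (by omega) (by omega) (by omega) e.1 e.2
  exact Prod.ext_iff.mpr ⟨h.1, h.2⟩

def sig0 (M : ℕ → ℕ → ℕ) (v : ℕ) : ℕ :=
  if v = M 1 1 then 1 else if v = M 1 2 then 2 else if v = M 1 3 then 3 else
    if v = M 1 4 then 4 else 0

/- ### Main theorem -/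

/-- Every harmonic matrix of order 4 is isomorphic to `A_μ^(4)`. -/
theorem harmonic4_unique (M : ℕ → ℕ → ℕ) (hM : IsHarmonic 4 M) :
    ∃ σ τ : ℕ → ℕ,
      Set.BijOn σ (Set.Icc 1 4) (Set.Icc 1 4) ∧
      Set.BijOn τ (Set.Icc 1 4) (Set.Icc 1 4) ∧
      ∀ i ∈ Set.Icc 1 4, ∀ j ∈ Set.Icc 1 4, A4 (τ i) j = σ (M i j) := by
  obtain ⟨hrow, hpair⟩ := hM
  -- basic facts about M
  have F1 : ∀ i j, 1 ≤ i → i ≤ 4 → 1 ≤ j → j ≤ 4 → 1 ≤ M i j ∧ M i j ≤ 4 := by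
    intro i j hi1 hi2 hj1 hj2
    have hmem : i ∈ Finset.Icc 1 4 := Finset.mem_Icc.mpr ⟨hi1, hi2⟩
    obtain ⟨j1, ⟨hm1, e1⟩, -⟩ := hrow i hmem 1 (by decide)
    obtain ⟨j2, ⟨hm2, e2⟩, -⟩ := hrow i hmem 2 (by decide)
    obtain ⟨j3, ⟨hm3, e3⟩, -⟩ := hrow i hmem 3 (by decide)
    obtain ⟨j4, ⟨hm4, e4⟩, -⟩ := hrow i hmem 4 (by decide)
    rw [Finset.mem_Icc] at hm1 hm2 hm3 hm4
    have d12 : j1 ≠ j2 := by intro h; rw [h] at e1; omega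
    have d13 : j1 ≠ j3 := by intro h; rw [h] at e1; omega
    have d14 : j1 ≠ j4 := by intro h; rw [h] at e1; omega
    have d23 : j2 ≠ j3 := by intro h; rw [h] at e2; omega
    have d24 : j2 ≠ j4 := by intro h; rw [h] at e2; omega
    have d34 : j3 ≠ j4 := by intro h; rw [h] at e3; omega
    have : j = j1 ∨ j = j2 ∨ j = j3 ∨ j = j4 := by omega
    rcases this with h | h | h | h <;> rw [h] <;> omega
  have F2 : ∀ i j j', 1 ≤ i → i ≤ 4 → 1 ≤ j → j ≤ 4 → 1 ≤ j' → j' ≤ 4 →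
      M i j = M i j' → j = j' := by
    intro i j j' hi1 hi2 hj1 hj2 hj1' hj2' h
    have hmem : i ∈ Finset.Icc 1 4 := Finset.mem_Icc.mpr ⟨hi1, hi2⟩
    have hv := F1 i j hi1 hi2 hj1 hj2
    exact (hrow i hmem (M i j) (Finset.mem_Icc.mpr hv)).unique
      ⟨Finset.mem_Icc.mpr ⟨hj1, hj2⟩, rfl⟩ ⟨Finset.mem_Icc.mpr ⟨hj1', hj2'⟩, h.symm⟩
  have hpairU : ∀ i j i' j', 1 ≤ i → i ≤ 4 → 1 ≤ j → j ≤ 3 → 1 ≤ i' → i' ≤ 4 →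
      1 ≤ j' → j' ≤ 3 → M i j = M i' j' → M i (j+1) = M i' (j'+1) → i = i' ∧ j = j' := by
    intro i j i' j' hi1 hi2 hj1 hj2 hi1' hi2' hj1' hj2' h1 h2
    have hb1 := F1 i j hi1 hi2 hj1 (by omega)
    have hb2 := F1 i (j+1) hi1 hi2 (by omega) (by omega)
    have hab : M i j ≠ M i (j+1) := fun h => by
      have := F2 i j (j+1) hi1 hi2 hj1 (by omega) (by omega) (by omega) h; omega
    have he := (hpair (M i j) (Finset.mem_Icc.mpr hb1) (M i (j+1)) (Finset.mem_Icc.mpr hb2)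
        hab).unique (y₁ := (i, j)) (y₂ := (i', j'))
      ⟨Finset.mem_Icc.mpr ⟨hi1, hi2⟩, Finset.mem_Icc.mpr ⟨hj1, by omega⟩, rfl, rfl⟩
      ⟨Finset.mem_Icc.mpr ⟨hi1', hi2'⟩, Finset.mem_Icc.mpr ⟨hj1', by omega⟩, h1.symm, h2.symm⟩
    exact ⟨congrArg Prod.fst he, congrArg Prod.snd he⟩
  -- the relabeling σ0 sending row 1 to (1,2,3,4)
  have hrow1 : ∀ j, 1 ≤ j → j ≤ 4 → sig0 M (M 1 j) = j := by
    intro j h1 h4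
    have n21 : M 1 2 ≠ M 1 1 := fun h => by
      have := F2 1 2 1 (by norm_num) (by norm_num) (by norm_num) (by norm_num) (by norm_num)
        (by norm_num) h; omega
    have n31 : M 1 3 ≠ M 1 1 := fun h => by
      have := F2 1 3 1 (by norm_num) (by norm_num) (by norm_num) (by norm_num) (by norm_num)
        (by norm_num) h; omega
    have n32 : M 1 3 ≠ M 1 2 := fun h => by
      have := F2 1 3 2 (by norm_num) (by norm_num) (by norm_num) (by norm_num) (by norm_num)
        (by norm_num) h; omega
    have n41 : M 1 4 ≠ M 1 1 := fun h => by
      have := F2 1 4 1 (by norm_num) (by norm_num) (by norm_num) (by norm_num) (by norm_num)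
        (by norm_num) h; omega
    have n42 : M 1 4 ≠ M 1 2 := fun h => by
      have := F2 1 4 2 (by norm_num) (by norm_num) (by norm_num) (by norm_num) (by norm_num)
        (by norm_num) h; omega
    have n43 : M 1 4 ≠ M 1 3 := fun h => by
      have := F2 1 4 3 (by norm_num) (by norm_num) (by norm_num) (by norm_num) (by norm_num)
        (by norm_num) h; omega
    interval_cases j
    · simp [sig0]
    · simp [sig0, n21]
    · simp [sig0, n31, n32]
    · simp [sig0, n41, n42, n43]
  have hexists : ∀ v, 1 ≤ v → v ≤ 4 → ∃ j, 1 ≤ j ∧ j ≤ 4 ∧ M 1 j = v := by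
    intro v h1 h4
    obtain ⟨j, ⟨hm, e⟩, -⟩ := hrow 1 (by decide) v (Finset.mem_Icc.mpr ⟨h1, h4⟩)
    rw [Finset.mem_Icc] at hm
    exact ⟨j, hm.1, hm.2, e⟩
  have sig0_mem : ∀ v, 1 ≤ v → v ≤ 4 → 1 ≤ sig0 M v ∧ sig0 M v ≤ 4 := by
    intro v h1 h4
    obtain ⟨j, a, b, e⟩ := hexists v h1 h4
    rw [← e, hrow1 j a b]
    omega
  have sig0_inj : ∀ v w, 1 ≤ v → v ≤ 4 → 1 ≤ w → w ≤ 4 → sig0 M v = sig0 M w → v = w := by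
    intro v w hv1 hv4 hw1 hw4 h
    obtain ⟨jv, a1, a2, ev⟩ := hexists v hv1 hv4
    obtain ⟨jw, b1, b2, ew⟩ := hexists w hw1 hw4
    rw [← ev, ← ew] at h ⊢
    rw [hrow1 jv a1 a2, hrow1 jw b1 b2] at h
    rw [h]
  -- entries of the normalized matrix N i j = sig0 M (M i j)
  have hNb : ∀ i j, 1 ≤ i → i ≤ 4 → 1 ≤ j → j ≤ 4 →
      1 ≤ sig0 M (M i j) ∧ sig0 M (M i j) ≤ 4 := by
    intro i j hi1 hi2 hj1 hj2
    have := F1 i j hi1 hi2 hj1 hj2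
    exact sig0_mem _ this.1 this.2
  have hNinj : ∀ i j j', 1 ≤ i → i ≤ 4 → 1 ≤ j → j ≤ 4 → 1 ≤ j' → j' ≤ 4 →
      sig0 M (M i j) = sig0 M (M i j') → j = j' := by
    intro i j j' hi1 hi2 hj1 hj2 hj1' hj2' h
    have b1 := F1 i j hi1 hi2 hj1 hj2
    have b2 := F1 i j' hi1 hi2 hj1' hj2'
    exact F2 i j j' hi1 hi2 hj1 hj2 hj1' hj2' (sig0_inj _ _ b1.1 b1.2 b2.1 b2.2 h)
  -- row memberships
  have hm2 : [sig0 M (M 2 1), sig0 M (M 2 2), sig0 M (M 2 3), sig0 M (M 2 4)] ∈ perms4 :=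
    row_mem_perms4 (fun j => sig0 M (M 2 j))
      (fun j h1 h2 => hNb 2 j (by norm_num) (by norm_num) h1 h2)
      (fun j j' a b c d h => hNinj 2 j j' (by norm_num) (by norm_num) a b c d h)
  have hm3 : [sig0 M (M 3 1), sig0 M (M 3 2), sig0 M (M 3 3), sig0 M (M 3 4)] ∈ perms4 :=
    row_mem_perms4 (fun j => sig0 M (M 3 j))
      (fun j h1 h2 => hNb 3 j (by norm_num) (by norm_num) h1 h2)
      (fun j j' a b c d h => hNinj 3 j j' (by norm_num) (by norm_num) a b c d h)
  have hm4 : [sig0 M (M 4 1), sig0 M (M 4 2), sig0 M (M 4 3), sig0 M (M 4 4)] ∈ perms4 :=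
    row_mem_perms4 (fun j => sig0 M (M 4 j))
      (fun j h1 h2 => hNb 4 j (by norm_num) (by norm_num) h1 h2)
      (fun j j' a b c d h => hNinj 4 j j' (by norm_num) (by norm_num) a b c d h)
  -- nodup of the 12 codes
  have hNp : ∀ i j i' j', 1 ≤ i → i ≤ 4 → 1 ≤ j → j ≤ 3 → 1 ≤ i' → i' ≤ 4 → 1 ≤ j' → j' ≤ 3 →
      sig0 M (M i j) = sig0 M (M i' j') →
      sig0 M (M i (j+1)) = sig0 M (M i' (j'+1)) → i = i' ∧ j = j' := by
    intro i j i' j' hi1 hi2 hj1 hj2 hi1' hi2' hj1' hj2' h1 h2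
    have b1 := F1 i j hi1 hi2 hj1 (by omega)
    have b2 := F1 i' j' hi1' hi2' hj1' (by omega)
    have b3 := F1 i (j+1) hi1 hi2 (by omega) (by omega)
    have b4 := F1 i' (j'+1) hi1' hi2' (by omega) (by omega)
    exact hpairU i j i' j' hi1 hi2 hj1 hj2 hi1' hi2' hj1' hj2'
      (sig0_inj _ _ b1.1 b1.2 b2.1 b2.2 h1) (sig0_inj _ _ b3.1 b3.2 b4.1 b4.2 h2)
  have h11 : sig0 M (M 1 1) = 1 := hrow1 1 (by norm_num) (by norm_num)
  have h12 : sig0 M (M 1 2) = 2 := hrow1 2 (by norm_num) (by norm_num)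
  have h13 : sig0 M (M 1 3) = 3 := hrow1 3 (by norm_num) (by norm_num)
  have h14 : sig0 M (M 1 4) = 4 := hrow1 4 (by norm_num) (by norm_num)
  have hnd0 := codes_nodup (fun i j => sig0 M (M i j)) hNb hNp
  simp only [idx12, List.map_cons, List.map_nil] at hnd0
  simp only [h11, h12, h13, h14] at hnd0
  have hnd : (codes3 [sig0 M (M 4 1), sig0 M (M 4 2), sig0 M (M 4 3), sig0 M (M 4 4)] ++
      codes3 [sig0 M (M 3 1), sig0 M (M 3 2), sig0 M (M 3 3), sig0 M (M 3 4)] ++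
      codes3 [sig0 M (M 2 1), sig0 M (M 2 2), sig0 M (M 2 3), sig0 M (M 2 4)] ++
      [7,13,19]).Nodup := hnd0
  obtain ⟨s, hs, t, ht, hmatch⟩ := core _ hm2 _ hm3 _ hm4 hnd
  refine ⟨fun v => rget s (sig0 M v), fun i => rget t i, ?_, ?_, ?_⟩
  · exact (perm_bijOn s hs).comp (bijOn4 (sig0 M) sig0_mem sig0_inj)
  · exact perm_bijOn t ht
  · intro i hi j hj
    rw [Set.mem_Icc] at hi hj
    have mm : ∀ p ∈ cells16, A4 (rget t p.1) p.2 =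
        rget s (rget (rows4 [1,2,3,4]
          [sig0 M (M 2 1), sig0 M (M 2 2), sig0 M (M 2 3), sig0 M (M 2 4)]
          [sig0 M (M 3 1), sig0 M (M 3 2), sig0 M (M 3 3), sig0 M (M 3 4)]
          [sig0 M (M 4 1), sig0 M (M 4 2), sig0 M (M 4 3), sig0 M (M 4 4)] p.1) p.2) := by
      intro p hp
      exact eq_of_beq (List.all_eq_true.mp hmatch p hp)
    obtain ⟨hi1, hi2⟩ := hi
    obtain ⟨hj1, hj2⟩ := hj
    interval_cases i <;> interval_cases j
    · show A4 (rget t 1) 1 = rget s (sig0 M (M 1 1))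
      rw [h11]; exact mm (1,1) (by decide)
    · show A4 (rget t 1) 2 = rget s (sig0 M (M 1 2))
      rw [h12]; exact mm (1,2) (by decide)
    · show A4 (rget t 1) 3 = rget s (sig0 M (M 1 3))
      rw [h13]; exact mm (1,3) (by decide)
    · show A4 (rget t 1) 4 = rget s (sig0 M (M 1 4))
      rw [h14]; exact mm (1,4) (by decide)
    · exact mm (2,1) (by decide)
    · exact mm (2,2) (by decide)
    · exact mm (2,3) (by decide)
    · exact mm (2,4) (by decide)
    · exact mm (3,1) (by decide)
    · exact mm (3,2) (by decide)
    · exact mm (3,3) (by decide)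
    · exact mm (3,4) (by decide)
    · exact mm (4,1) (by decide)
    · exact mm (4,2) (by decide)
    · exact mm (4,3) (by decide)
    · exact mm (4,4) (by decide)
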